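/- Suppose: ‖A_x − A_{x̃}‖ ≤ L_A‖x − x̃‖ and ‖f_x − f_{x̃}‖ ≤ L_f‖x − x̃‖ for all x, x̃ ∈ D; there are α ∈ [0,1) and γ_N > 0 with ‖N_x⁻¹ ∘ M_x‖ ≤ α, ‖M_x ∘ N_x⁻¹‖ ≤ α, and γ_N·‖N_x⁻¹‖ ≤ 1 for all x ∈ D; and ∇Q is L_Q-Lipschitz. Let x̄ ∈ D, ū ∈ U, w̄ ∈ W satisfy A_{x̄}ū = b − f_{x̄} and A_{x̄}* w̄ = −∇Q(ū). Fix γ_B > 1 with α²γ_B < 1, λ ∈ (0,1), and β > 0, and set c₁ := 1 + β + α²γ_B/(λ(1 − α²γ_B)) and c₂ := (1 + β)/β + α²γ_B/((1 − λ)(1 − α²γ_B)); put π_w := c₁·γ_B·L_A²·‖w̄‖²/γ_N², C_Q := c₂·γ_B·L_Q²/γ_N², and π_u := c₁·γ_B·L_A²·‖ū‖²/γ_N² + c₂·γ_B·L_f²/γ_N². Then for every x ∈ D, u, u⁺ ∈ U, and w, w⁺ ∈ W satisfying the splitting updates N_x u⁺ = b − f_x − M_x u and N_x* w⁺ = −∇Q(u⁺)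 − M_x* w, the inequalities hold: ‖u − ū‖² ≥ γ_B‖u⁺ − ū‖² − π_u‖x − x̄‖² and ‖w − w̄‖² ≥ γ_B‖w⁺ − w̄‖² − C_Q‖u⁺ − ū‖² − π_w‖x − x̄‖². -/

import Mathlib

/-- Scalar key inequality: a weighted Young-type estimate. -/
theorem aux_key_split (α γB lam β t a₁ a₂ s : ℝ)
    (hγB : 1 < γB) (hαγB : α ^ 2 * γB < 1)
    (hlam0 : 0 < lam) (hlam1 : lam < 1) (hβ : 0 < β)
    (hs0 : 0 ≤ s) (hs : s ≤ α * t + a₁ + a₂) :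
    γB * s ^ 2 ≤ t ^ 2
      + γB * (1 + β + α ^ 2 * γB / (lam * (1 - α ^ 2 * γB))) * a₁ ^ 2
      + γB * ((1 + β) / β + α ^ 2 * γB / ((1 - lam) * (1 - α ^ 2 * γB))) * a₂ ^ 2 := by
  have h1q : 0 < 1 - α ^ 2 * γB := by linarith
  have hd1 : 0 < lam * (1 - α ^ 2 * γB) := mul_pos hlam0 h1q
  have hd2 : 0 < (1 - lam) * (1 - α ^ 2 * γB) := mul_pos (by linarith) h1q
  have hγB0 : (0:ℝ) < γB := by linarith
  have hs2 : s ^ 2 ≤ (α * t + a₁ + a₂) ^ 2 := pow_le_pow_left₀ hs0 hs 2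
  have hiden : t ^ 2
      + γB * (1 + β + α ^ 2 * γB / (lam * (1 - α ^ 2 * γB))) * a₁ ^ 2
      + γB * ((1 + β) / β + α ^ 2 * γB / ((1 - lam) * (1 - α ^ 2 * γB))) * a₂ ^ 2
      - γB * (α * t + a₁ + a₂) ^ 2
      = (lam * (1 - α ^ 2 * γB) * t - γB * α * a₁) ^ 2 / (lam * (1 - α ^ 2 * γB))
        + ((1 - lam) * (1 - α ^ 2 * γB) * t - γB * α * a₂) ^ 2 / ((1 - lam) * (1 - α ^ 2 * γB))
        + γB * (β * a₁ - a₂) ^ 2 / β := by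
    field_simp [(show (1 - lam) ≠ 0 by linarith), h1q.ne', (show 1 - γB * α ^ 2 ≠ 0 by rw [mul_comm]; exact h1q.ne'), hβ.ne', hlam0.ne']
    ring
  have t1 : 0 ≤ (lam * (1 - α ^ 2 * γB) * t - γB * α * a₁) ^ 2 / (lam * (1 - α ^ 2 * γB)) :=
    div_nonneg (sq_nonneg _) hd1.le
  have t2 : 0 ≤ ((1 - lam) * (1 - α ^ 2 * γB) * t - γB * α * a₂) ^ 2
      / ((1 - lam) * (1 - α ^ 2 * γB)) :=
    div_nonneg (sq_nonneg _) hd2.le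
  have t3 : 0 ≤ γB * (β * a₁ - a₂) ^ 2 / β :=
    div_nonneg (mul_nonneg hγB0.le (sq_nonneg _)) hβ.le
  nlinarith [mul_le_mul_of_nonneg_left hs2 hγB0.le]

/-- Helper: norm of an operator application, with an operator-norm bound. -/
theorem aux_apply_le {E F : Type*} [NormedAddCommGroup E] [NormedAddCommGroup F]
    [NormedSpace ℝ E] [NormedSpace ℝ F] (T : E →L[ℝ] F) {c d : ℝ}
    (hT : ‖T‖ ≤ c) (hc : 0 ≤ c) (v : E) (hv : ‖v‖ ≤ d) :
    ‖T v‖ ≤ c * d :=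
  (T.le_opNorm v).trans (mul_le_mul hT hv (norm_nonneg v) hc)

set_option maxHeartbeats 1000000 in
/-- Verification of the splitting assumption for a splitting `A_x = N_x + M_x`
with `N_x` boundedly invertible (Jacobi/Gauss–Seidel type splittings). -/
theorem splitting_assumption_verified
    {U W X : Type*}
    [NormedAddCommGroup U] [InnerProductSpace ℝ U] [CompleteSpace U]
    [NormedAddCommGroup W] [InnerProductSpace ℝ W] [CompleteSpace W]
    [NormedAddCommGroup X] [InnerProductSpace ℝ X]
    (D : Set X)
    (A : X → (U →L[ℝ] W)) (N : X → (U ≃L[ℝ] W)) (f : X → W) (b : W)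
    (Q : U → ℝ) (gradQ : U → U) (hQ : ∀ u : U, HasGradientAt Q (gradQ u) u)
    (LA Lf LQ : ℝ)
    (hLA : ∀ x ∈ D, ∀ x' ∈ D, ‖A x - A x'‖ ≤ LA * ‖x - x'‖)
    (hLf : ∀ x ∈ D, ∀ x' ∈ D, ‖f x - f x'‖ ≤ Lf * ‖x - x'‖)
    (α γN : ℝ) (hα0 : 0 ≤ α) (hα1 : α < 1) (hγN : 0 < γN)
    (hNM : ∀ x ∈ D,
      ‖((N x).symm : W →L[ℝ] U).comp (A x - ((N x) : U →L[ℝ] W))‖ ≤ α)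
    (hMN : ∀ x ∈ D,
      ‖(A x - ((N x) : U →L[ℝ] W)).comp ((N x).symm : W →L[ℝ] U)‖ ≤ α)
    (hNinv : ∀ x ∈ D, γN * ‖((N x).symm : W →L[ℝ] U)‖ ≤ 1)
    (hLQ : ∀ u u' : U, ‖gradQ u - gradQ u'‖ ≤ LQ * ‖u - u'‖)
    (xb : X) (hxb : xb ∈ D) (ub : U) (wb : W)
    (hub : A xb ub = b - f xb)
    (hwb : ContinuousLinearMap.adjoint (A xb) wb = -gradQ ub)
    (γB lam β : ℝ) (hγB : 1 < γB) (hαγB : α ^ 2 * γB < 1)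
    (hlam0 : 0 < lam) (hlam1 : lam < 1) (hβ : 0 < β) :
    let c₁ := 1 + β + α ^ 2 * γB / (lam * (1 - α ^ 2 * γB))
    let c₂ := (1 + β) / β + α ^ 2 * γB / ((1 - lam) * (1 - α ^ 2 * γB))
    let πw := c₁ * γB * LA ^ 2 * ‖wb‖ ^ 2 / γN ^ 2
    let CQ := c₂ * γB * LQ ^ 2 / γN ^ 2
    let πu := c₁ * γB * LA ^ 2 * ‖ub‖ ^ 2 / γN ^ 2 + c₂ * γB * Lf ^ 2 / γN ^ 2
    ∀ x ∈ D, ∀ (u u' : U) (w w' : W),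
      ((N x) : U →L[ℝ] W) u' = b - f x - (A x - ((N x) : U →L[ℝ] W)) u →
      ContinuousLinearMap.adjoint (((N x)) : U →L[ℝ] W) w'
          = -gradQ u' - ContinuousLinearMap.adjoint (A x - ((N x) : U →L[ℝ] W)) w →
      ‖u - ub‖ ^ 2 ≥ γB * ‖u' - ub‖ ^ 2 - πu * ‖x - xb‖ ^ 2 ∧
      ‖w - wb‖ ^ 2 ≥ γB * ‖w' - wb‖ ^ 2 - CQ * ‖u' - ub‖ ^ 2
          - πw * ‖x - xb‖ ^ 2 := by
  intro c₁ c₂ πw CQ πu x hx u u' w w' hu hw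
  have hc₁ : (1 + β + α ^ 2 * γB / (lam * (1 - α ^ 2 * γB))) = c₁ := rfl
  have hc₂ : ((1 + β) / β + α ^ 2 * γB / ((1 - lam) * (1 - α ^ 2 * γB))) = c₂ := rfl
  have hπu : πu = c₁ * γB * LA ^ 2 * ‖ub‖ ^ 2 / γN ^ 2 + c₂ * γB * Lf ^ 2 / γN ^ 2 := rfl
  have hπw : πw = c₁ * γB * LA ^ 2 * ‖wb‖ ^ 2 / γN ^ 2 := rfl
  have hCQ : CQ = c₂ * γB * LQ ^ 2 / γN ^ 2 := rfl
  have hγN' : (0:ℝ) ≤ 1 / γN := by positivity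
  have hNinvle : ‖((N x).symm : W →L[ℝ] U)‖ ≤ 1 / γN := by
    rw [le_div_iff₀ hγN, mul_comm]; exact hNinv x hx
  have hALip : ‖A xb - A x‖ ≤ LA * ‖x - xb‖ := by
    have h := hLA xb hxb x hx
    have h2 : ‖xb - x‖ = ‖x - xb‖ := norm_sub_rev xb x
    rw [h2] at h; exact h
  have hfLip : ‖f xb - f x‖ ≤ Lf * ‖x - xb‖ := by
    have h := hLf xb hxb x hx
    have h2 : ‖xb - x‖ = ‖x - xb‖ := norm_sub_rev xb x
    rw [h2] at h; exact h
  -- ### Part 1 : the primal update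
  have e1 : ((N x) : U →L[ℝ] W) (u' - ub)
      = (A xb - A x) ub + (f xb - f x) + (A x - ((N x) : U →L[ℝ] W)) (ub - u) := by
    simp only [map_sub, ContinuousLinearMap.sub_apply, hu, hub]
    abel
  have e2 : u' - ub = ((N x).symm : W →L[ℝ] U)
      ((A xb - A x) ub + (f xb - f x) + (A x - ((N x) : U →L[ℝ] W)) (ub - u)) := by
    rw [← e1]
    exact ((N x).symm_apply_apply (u' - ub)).symm
  have hb1 : ‖((N x).symm : W →L[ℝ] U) ((A xb - A x) ub)‖
      ≤ (1 / γN) * (LA * ‖x - xb‖ * ‖ub‖) :=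
    aux_apply_le _ hNinvle hγN' _
      (((A xb - A x).le_opNorm ub).trans (mul_le_mul_of_nonneg_right hALip (norm_nonneg ub)))
  have hb2 : ‖((N x).symm : W →L[ℝ] U) (f xb - f x)‖ ≤ (1 / γN) * (Lf * ‖x - xb‖) :=
    aux_apply_le _ hNinvle hγN' _ hfLip
  have hb3 : ‖((N x).symm : W →L[ℝ] U) ((A x - ((N x) : U →L[ℝ] W)) (ub - u))‖
      ≤ α * ‖u - ub‖ := by
    have : ((N x).symm : W →L[ℝ] U) ((A x - ((N x) : U →L[ℝ] W)) (ub - u))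
        = (((N x).symm : W →L[ℝ] U).comp (A x - ((N x) : U →L[ℝ] W))) (ub - u) := rfl
    rw [this]
    have h := aux_apply_le _ (hNM x hx) hα0 (ub - u) le_rfl
    rwa [norm_sub_rev ub u] at h
  have hbu : ‖u' - ub‖ ≤ α * ‖u - ub‖ + (LA * ‖ub‖ / γN) * ‖x - xb‖
      + (Lf / γN) * ‖x - xb‖ := by
    rw [e2, map_add, map_add]
    have htri := norm_add₃_le (E := U)
      (a := ((N x).symm : W →L[ℝ] U) ((A xb - A x) ub))
      (b := ((N x).symm : W →L[ℝ] U) (f xb - f x))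
      (c := ((N x).symm : W →L[ℝ] U) ((A x - ((N x) : U →L[ℝ] W)) (ub - u)))
    have e3 : (1 / γN) * (LA * ‖x - xb‖ * ‖ub‖) = (LA * ‖ub‖ / γN) * ‖x - xb‖ := by ring
    have e4 : (1 / γN) * (Lf * ‖x - xb‖) = (Lf / γN) * ‖x - xb‖ := by ring
    linarith [htri, hb1, hb2, hb3, e3 ▸ hb1, e4 ▸ hb2]
  have key1 := aux_key_split α γB lam β ‖u - ub‖ ((LA * ‖ub‖ / γN) * ‖x - xb‖)
    ((Lf / γN) * ‖x - xb‖) ‖u' - ub‖ hγB hαγB hlam0 hlam1 hβ (norm_nonneg _) hbu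
  rw [hc₁, hc₂] at key1
  have heq1 : γB * c₁ * ((LA * ‖ub‖ / γN) * ‖x - xb‖) ^ 2
      + γB * c₂ * ((Lf / γN) * ‖x - xb‖) ^ 2
      = (c₁ * γB * LA ^ 2 * ‖ub‖ ^ 2 / γN ^ 2 + c₂ * γB * Lf ^ 2 / γN ^ 2) * ‖x - xb‖ ^ 2 := by
    ring
  constructor
  · rw [ge_iff_le, hπu]
    linarith [key1, heq1]
  -- ### Part 2 : the dual update
  · have e1w : ContinuousLinearMap.adjoint ((N x) : U →L[ℝ] W) (w' - wb)
        = (gradQ ub - gradQ u')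
          + ContinuousLinearMap.adjoint (A xb - A x) wb
          + ContinuousLinearMap.adjoint (A x - ((N x) : U →L[ℝ] W)) (wb - w) := by
      simp only [map_sub, ContinuousLinearMap.sub_apply, hw, hwb]
      abel
    have e2w : w' - wb = ContinuousLinearMap.adjoint ((N x).symm : W →L[ℝ] U)
        ((gradQ ub - gradQ u')
          + ContinuousLinearMap.adjoint (A xb - A x) wb
          + ContinuousLinearMap.adjoint (A x - ((N x) : U →L[ℝ] W)) (wb - w)) := by
      rw [← e1w]
      have hcomp : (ContinuousLinearMap.adjoint ((N x).symm : W →L[ℝ] U)).comp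
            (ContinuousLinearMap.adjoint ((N x) : U →L[ℝ] W))
          = ContinuousLinearMap.id ℝ W := by
        rw [← ContinuousLinearMap.adjoint_comp, ContinuousLinearEquiv.coe_comp_coe_symm,
          ContinuousLinearMap.adjoint_id]
      calc w' - wb
          = ((ContinuousLinearMap.adjoint ((N x).symm : W →L[ℝ] U)).comp
              (ContinuousLinearMap.adjoint ((N x) : U →L[ℝ] W))) (w' - wb) := by
            rw [hcomp]; rfl
        _ = _ := rfl
    have hadjinv : ‖ContinuousLinearMap.adjoint ((N x).symm : W →L[ℝ] U)‖ ≤ 1 / γN := by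
      rw [LinearIsometryEquiv.norm_map ContinuousLinearMap.adjoint]
      exact hNinvle
    have hw1 : ‖ContinuousLinearMap.adjoint ((N x).symm : W →L[ℝ] U) (gradQ ub - gradQ u')‖
        ≤ (1 / γN) * (LQ * ‖u' - ub‖) := by
      refine aux_apply_le _ hadjinv hγN' _ ?_
      have h := hLQ ub u'
      rwa [norm_sub_rev ub u'] at h
    have hw2 : ‖ContinuousLinearMap.adjoint ((N x).symm : W →L[ℝ] U)
          (ContinuousLinearMap.adjoint (A xb - A x) wb)‖
        ≤ (1 / γN) * (LA * ‖x - xb‖ * ‖wb‖) := by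
      refine aux_apply_le _ hadjinv hγN' _ ?_
      have hn : ‖ContinuousLinearMap.adjoint (A xb - A x)‖ = ‖A xb - A x‖ :=
        LinearIsometryEquiv.norm_map ContinuousLinearMap.adjoint _
      calc ‖ContinuousLinearMap.adjoint (A xb - A x) wb‖
          ≤ ‖ContinuousLinearMap.adjoint (A xb - A x)‖ * ‖wb‖ :=
            (ContinuousLinearMap.adjoint (A xb - A x)).le_opNorm wb
        _ = ‖A xb - A x‖ * ‖wb‖ := by rw [hn]
        _ ≤ LA * ‖x - xb‖ * ‖wb‖ := mul_le_mul_of_nonneg_right hALip (norm_nonneg wb)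
    have hw3 : ‖ContinuousLinearMap.adjoint ((N x).symm : W →L[ℝ] U)
          (ContinuousLinearMap.adjoint (A x - ((N x) : U →L[ℝ] W)) (wb - w))‖
        ≤ α * ‖w - wb‖ := by
      have hc : ContinuousLinearMap.adjoint ((N x).symm : W →L[ℝ] U)
            (ContinuousLinearMap.adjoint (A x - ((N x) : U →L[ℝ] W)) (wb - w))
          = (ContinuousLinearMap.adjoint
              ((A x - ((N x) : U →L[ℝ] W)).comp ((N x).symm : W →L[ℝ] U))) (wb - w) := by
        rw [ContinuousLinearMap.adjoint_comp]; rfl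
      rw [hc]
      have hn : ‖ContinuousLinearMap.adjoint
            ((A x - ((N x) : U →L[ℝ] W)).comp ((N x).symm : W →L[ℝ] U))‖
          = ‖(A x - ((N x) : U →L[ℝ] W)).comp ((N x).symm : W →L[ℝ] U)‖ :=
        LinearIsometryEquiv.norm_map ContinuousLinearMap.adjoint _
      have h := aux_apply_le _ (hn ▸ hMN x hx) hα0 (wb - w) le_rfl
      rwa [norm_sub_rev wb w] at h
    have hbw : ‖w' - wb‖ ≤ α * ‖w - wb‖ + (LA * ‖wb‖ / γN) * ‖x - xb‖
        + (LQ / γN) * ‖u' - ub‖ := by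
      rw [e2w, map_add, map_add]
      have htri := norm_add₃_le (E := W)
        (a := ContinuousLinearMap.adjoint ((N x).symm : W →L[ℝ] U) (gradQ ub - gradQ u'))
        (b := ContinuousLinearMap.adjoint ((N x).symm : W →L[ℝ] U)
          (ContinuousLinearMap.adjoint (A xb - A x) wb))
        (c := ContinuousLinearMap.adjoint ((N x).symm : W →L[ℝ] U)
          (ContinuousLinearMap.adjoint (A x - ((N x) : U →L[ℝ] W)) (wb - w)))
      have e3 : (1 / γN) * (LA * ‖x - xb‖ * ‖wb‖) = (LA * ‖wb‖ / γN) * ‖x - xb‖ := by ring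
      have e4 : (1 / γN) * (LQ * ‖u' - ub‖) = (LQ / γN) * ‖u' - ub‖ := by ring
      linarith [htri, hw1, hw2, hw3, e3 ▸ hw2, e4 ▸ hw1]
    have key2 := aux_key_split α γB lam β ‖w - wb‖ ((LA * ‖wb‖ / γN) * ‖x - xb‖)
      ((LQ / γN) * ‖u' - ub‖) ‖w' - wb‖ hγB hαγB hlam0 hlam1 hβ (norm_nonneg _) hbw
    rw [hc₁, hc₂] at key2
    have heq2 : γB * c₁ * ((LA * ‖wb‖ / γN) * ‖x - xb‖) ^ 2
        = (c₁ * γB * LA ^ 2 * ‖wb‖ ^ 2 / γN ^ 2) * ‖x - xb‖ ^ 2 := by ring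
    have heq3 : γB * c₂ * ((LQ / γN) * ‖u' - ub‖) ^ 2
        = (c₂ * γB * LQ ^ 2 / γN ^ 2) * ‖u' - ub‖ ^ 2 := by ring
    rw [ge_iff_le, hπw, hCQ]
    linarith [key2, heq2, heq3]
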